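/- Let k be a field and A = k⟨s,t,y⟩/(st−1). Then the universal localisation A[s⁻¹] ≅ k⟨s, s⁻¹, y⟩ is not flat as a left A-module: the map of right A-modules given by left multiplication by x = (1−ts)y on A is injective, but after applying (−) ⊗_A A[s⁻¹] it becomes the zero map on a nonzero module, hence not injective. -/

import Mathlib

/-!
STATEMENT 18: let `k` be a field and `A = k⟨s,t,y⟩/(st−1)`.  Then the universal
localisation `A[s⁻¹] ≅ k⟨s,s⁻¹,y⟩` is not flat as a left `A`-module: with
`x = (1−ts)y`, left multiplication by `x` is an injective endomorphism of `A` as a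
right `A`-module, but after applying `(−) ⊗_A A[s⁻¹]` it becomes the zero map on a
nonzero module, hence not injective.  (Flatness is expressed by the equational
criterion; the failure of flatness follows from `f x = 0`, `A[s⁻¹] ≠ 0` and the
injectivity of left multiplication by `x`.)
-/

/-- The relation `st = 1` on the free algebra on three generators `s,t,y`. -/
def styRel (k : Type) [Field k] :
    FreeAlgebra k (Fin 3) → FreeAlgebra k (Fin 3) → Prop :=
  fun a b => a = FreeAlgebra.ι k 0 * FreeAlgebra.ι k 1 ∧ b = 1

/-- `A = k⟨s,t,y⟩/(st−1)`. -/
abbrev AA (k : Type) [Field k] : Type := RingQuot (styRel k)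

/-- The generator `s`. -/
noncomputable def sA (k : Type) [Field k] : AA k :=
  RingQuot.mkAlgHom k (styRel k) (FreeAlgebra.ι k 0)

/-- The generator `t`. -/
noncomputable def tA (k : Type) [Field k] : AA k :=
  RingQuot.mkAlgHom k (styRel k) (FreeAlgebra.ι k 1)

/-- The generator `y`. -/
noncomputable def yA (k : Type) [Field k] : AA k :=
  RingQuot.mkAlgHom k (styRel k) (FreeAlgebra.ι k 2)

section Aux

variable (k : Type) [Field k]

/-- The module of "words": finitely supported functions on lists over `Fin 3`. -/
abbrev MM := List (Fin 3) →₀ k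

/-- action of `s` on words -/
def sig0 : List (Fin 3) → List (Fin 3)
  | [] => [0]
  | a :: w => if a = 1 then w else 0 :: a :: w

lemma sig0_cons1 (w : List (Fin 3)) : sig0 ((1 : Fin 3) :: w) = w := by
  simp [sig0]

noncomputable def opS : MM k →ₗ[k] MM k := Finsupp.lmapDomain k k sig0
noncomputable def opT : MM k →ₗ[k] MM k :=
  Finsupp.lmapDomain k k (fun w => (1 : Fin 3) :: w)
noncomputable def opY : MM k →ₗ[k] MM k :=
  Finsupp.lmapDomain k k (fun w => (2 : Fin 3) :: w)

noncomputable def Lop : FreeAlgebra k (Fin 3) →ₐ[k] Module.End k (MM k) :=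
  FreeAlgebra.lift k ![opS k, opT k, opY k]

lemma opS_mul_opT : (opS k) * (opT k) = 1 := by
  apply LinearMap.ext; intro m
  show opS k (opT k m) = m
  simp only [opS, opT, Finsupp.lmapDomain_apply]
  rw [← Finsupp.mapDomain_comp]
  have h : sig0 ∘ (fun w => (1 : Fin 3) :: w) = id := by
    funext w; simp [sig0]
  rw [h, Finsupp.mapDomain_id]

lemma Lop_rel : ∀ a b, styRel k a b → Lop k a = Lop k b := by
  rintro a b ⟨rfl, rfl⟩
  rw [map_one, map_mul, Lop, FreeAlgebra.lift_ι_apply, FreeAlgebra.lift_ι_apply]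
  exact opS_mul_opT k

noncomputable def rho : AA k →ₐ[k] Module.End k (MM k) :=
  RingQuot.liftAlgHom k ⟨Lop k, Lop_rel k⟩

/-- products of generators indexed by words -/
noncomputable def P (w : List (Fin 3)) : AA k :=
  (w.map ![sA k, tA k, yA k]).prod

noncomputable def theta : MM k →ₗ[k] AA k :=
  Finsupp.linearCombination k (P k)

lemma st_one : sA k * tA k = 1 := by
  rw [sA, tA, ← map_mul]
  have h : styRel k (FreeAlgebra.ι k 0 * FreeAlgebra.ι k 1) 1 := ⟨rfl, rfl⟩
  rw [RingQuot.mkAlgHom_rel k h, map_one]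

lemma P_nil : P k [] = 1 := rfl

lemma P_cons (a : Fin 3) (w : List (Fin 3)) :
    P k (a :: w) = ![sA k, tA k, yA k] a * P k w := by
  simp [P]

lemma P_sig0 (w : List (Fin 3)) : P k (sig0 w) = sA k * P k w := by
  cases w with
  | nil => simp [sig0, P_cons, P_nil]
  | cons a w =>
    by_cases h : a = 1
    · subst h
      rw [sig0_cons1, P_cons]
      show P k w = sA k * (tA k * P k w)
      rw [← mul_assoc, st_one, one_mul]
    · rw [show sig0 (a :: w) = 0 :: a :: w by simp [sig0, h], P_cons]
      rfl

lemma theta_single (w : List (Fin 3)) (b : k) :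
    theta k (Finsupp.single w b) = b • P k w := by
  simp [theta]

lemma theta_opS (m : MM k) : theta k (opS k m) = sA k * theta k m := by
  induction m using Finsupp.induction_linear with
  | zero => simp
  | add f g hf hg => rw [map_add, map_add, hf, hg, map_add, mul_add]
  | single w b =>
    rw [opS, Finsupp.lmapDomain_apply, Finsupp.mapDomain_single,
      theta_single, theta_single, P_sig0, mul_smul_comm]

lemma theta_opT (m : MM k) : theta k (opT k m) = tA k * theta k m := by
  induction m using Finsupp.induction_linear with
  | zero => simp
  | add f g hf hg => rw [map_add, map_add, hf, hg, map_add, mul_add]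
  | single w b =>
    rw [opT, Finsupp.lmapDomain_apply, Finsupp.mapDomain_single,
      theta_single, theta_single, P_cons, mul_smul_comm]
    rfl

lemma theta_opY (m : MM k) : theta k (opY k m) = yA k * theta k m := by
  induction m using Finsupp.induction_linear with
  | zero => simp
  | add f g hf hg => rw [map_add, map_add, hf, hg, map_add, mul_add]
  | single w b =>
    rw [opY, Finsupp.lmapDomain_apply, Finsupp.mapDomain_single,
      theta_single, theta_single, P_cons, mul_smul_comm]
    rfl

lemma rho_sA : rho k (sA k) = opS k := by
  rw [sA, rho, RingQuot.liftAlgHom_mkAlgHom_apply, Lop, FreeAlgebra.lift_ι_apply]; rfl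

lemma rho_tA : rho k (tA k) = opT k := by
  rw [tA, rho, RingQuot.liftAlgHom_mkAlgHom_apply, Lop, FreeAlgebra.lift_ι_apply]; rfl

lemma rho_yA : rho k (yA k) = opY k := by
  rw [yA, rho, RingQuot.liftAlgHom_mkAlgHom_apply, Lop, FreeAlgebra.lift_ι_apply]; rfl

lemma key (a : AA k) (m : MM k) : theta k (rho k a m) = a * theta k m := by
  obtain ⟨g, rfl⟩ := RingQuot.mkAlgHom_surjective k (styRel k) a
  induction g generalizing m with
  | grade0 r =>
    rw [AlgHom.commutes, AlgHom.commutes, Module.algebraMap_end_apply,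
      map_smul, Algebra.smul_def]
  | grade1 i =>
    fin_cases i
    · show theta k (rho k (sA k) m) = sA k * theta k m
      rw [rho_sA]; exact theta_opS k m
    · show theta k (rho k (tA k) m) = tA k * theta k m
      rw [rho_tA]; exact theta_opT k m
    · show theta k (rho k (yA k) m) = yA k * theta k m
      rw [rho_yA]; exact theta_opY k m
  | mul a b ha hb =>
    rw [map_mul, map_mul, Module.End.mul_apply, ha, hb, mul_assoc]
  | add a b ha hb =>
    rw [map_add, map_add, LinearMap.add_apply, map_add, ha, hb, add_mul]

lemma phi_inj : Function.Injective (fun a : AA k => rho k a (Finsupp.single [] 1)) := by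
  intro a b h
  have ha := key k a (Finsupp.single ([] : List (Fin 3)) 1)
  have hb := key k b (Finsupp.single ([] : List (Fin 3)) 1)
  rw [theta_single, P_nil, one_smul, mul_one] at ha hb
  rw [← ha, ← hb]
  exact congrArg (theta k) h

lemma rho_x_apply (m : MM k) :
    rho k ((1 - tA k * sA k) * yA k) m =
      Finsupp.mapDomain (fun w => (2 : Fin 3) :: w) m
        - Finsupp.mapDomain (fun w => (1 : Fin 3) :: (0 : Fin 3) :: (2 : Fin 3) :: w) m := by
  rw [map_mul, map_sub, map_one, map_mul, rho_sA, rho_tA, rho_yA]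
  show opY k m - opT k (opS k (opY k m)) = _
  simp only [opS, opT, opY, Finsupp.lmapDomain_apply]
  rw [← Finsupp.mapDomain_comp, ← Finsupp.mapDomain_comp]
  have hc : ((fun w => (1 : Fin 3) :: w) ∘ sig0) ∘ (fun w => (2 : Fin 3) :: w)
      = fun w => (1 : Fin 3) :: (0 : Fin 3) :: (2 : Fin 3) :: w := by
    funext w; simp [Function.comp, sig0]
  rw [hc]

lemma rho_x_ker (m : MM k) (h : rho k ((1 - tA k * sA k) * yA k) m = 0) : m = 0 := by
  rw [rho_x_apply, sub_eq_zero] at h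
  ext w
  have h2 := congrFun (congrArg DFunLike.coe h) ((2 : Fin 3) :: w)
  rw [Finsupp.mapDomain_apply (fun a b hab => by injection hab) m w] at h2
  rw [Finsupp.mapDomain_notin_range] at h2
  · exact h2
  · rintro ⟨v, hv⟩
    injection hv with h1 _
    exact absurd h1 (by decide)

lemma xmul_inj : Function.Injective (fun a : AA k => (1 - tA k * sA k) * yA k * a) := by
  intro a b h
  simp only at h
  apply phi_inj k
  show rho k a (Finsupp.single [] 1) = rho k b (Finsupp.single [] 1)
  have h0 : rho k ((1 - tA k * sA k) * yA k)
      (rho k a (Finsupp.single [] 1) - rho k b (Finsupp.single [] 1)) = 0 := by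
    rw [map_sub, ← Module.End.mul_apply, ← Module.End.mul_apply, ← map_mul, ← map_mul, h,
      sub_self]
  exact sub_eq_zero.mp (rho_x_ker k _ h0)

end Aux

/-- An `s`-inverting map to `k` itself, used to show `L ≠ 0`. -/
noncomputable def gK (k : Type) [Field k] : AA k →ₐ[k] k :=
  RingQuot.liftAlgHom k ⟨FreeAlgebra.lift k (fun _ => (1 : k)), by
    rintro a b ⟨rfl, rfl⟩
    simp⟩

lemma gK_sA (k : Type) [Field k] : gK k (sA k) = 1 := by
  rw [sA, gK, RingQuot.liftAlgHom_mkAlgHom_apply, FreeAlgebra.lift_ι_apply]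


theorem statement18 (k : Type) [Field k]
    -- f : A → L is the universal s-inverting k-algebra homomorphism
    -- (L ≅ k⟨s,s⁻¹,y⟩):
    (L : Type) [Ring L] [Algebra k L] (f : AA k →ₐ[k] L)
    (hinv : IsUnit (f (sA k)))
    (huniv : ∀ (C : Type) [Ring C] [Algebra k C] (g : AA k →ₐ[k] C),
        IsUnit (g (sA k)) → ∃! h : L →ₐ[k] C, h.comp f = g) :
    -- left multiplication by x = (1−ts)y is injective on A as a right A-module:
    Function.Injective (fun a : AA k => (1 - tA k * sA k) * yA k * a) ∧
    -- but its image in L = A[s⁻¹] is zero, while L is a nonzero ring: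
    f ((1 - tA k * sA k) * yA k) = 0 ∧
    (0 : L) ≠ 1 ∧
    -- hence L is not flat as a left A-module (equational criterion fails):
    ¬ (∀ (n : ℕ) (a : Fin n → AA k) (x : Fin n → L),
        (∑ i, f (a i) * x i) = 0 →
          ∃ (m : ℕ) (y : Fin m → L) (c : Fin n → Fin m → AA k),
            (∀ i, x i = ∑ j, f (c i j) * y j) ∧ ∀ j, (∑ i, a i * c i j) = 0) := by
  have hts : f (tA k) * f (sA k) = 1 := by
    obtain ⟨u, hu⟩ := hinv
    have h1 : f (sA k) * f (tA k) = 1 := by rw [← map_mul, st_one, map_one]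
    have h2 : f (tA k) = ↑u⁻¹ := by
      have h3 := congrArg (fun z => (↑u⁻¹ : L) * z) h1
      simpa [← hu, ← mul_assoc] using h3
    rw [h2, ← hu]
    exact u.inv_mul
  have hfx : f ((1 - tA k * sA k) * yA k) = 0 := by
    rw [map_mul, map_sub, map_one, map_mul, hts, sub_self, zero_mul]
  have hL : (0 : L) ≠ 1 := by
    intro h01
    obtain ⟨h, -⟩ := huniv k (gK k) (by rw [gK_sA]; exact isUnit_one)
    have h4 := congrArg h h01
    rw [map_zero, map_one] at h4
    exact zero_ne_one h4
  refine ⟨xmul_inj k, hfx, hL, ?_⟩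
  intro hflat
  obtain ⟨m, yv, c, h1, h2⟩ :=
    hflat 1 (fun _ => (1 - tA k * sA k) * yA k) (fun _ => 1) (by simp [hfx])
  have hc : ∀ j, c 0 j = 0 := by
    intro j
    have h3 := h2 j
    rw [Fin.sum_univ_one] at h3
    apply xmul_inj k
    show (1 - tA k * sA k) * yA k * c 0 j = (1 - tA k * sA k) * yA k * 0
    rw [mul_zero, h3]
  have h5 := h1 0
  simp only [hc, map_zero, zero_mul, Finset.sum_const_zero] at h5
  exact hL h5.symm
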